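/- arXiv:2506.19311 — 3 statements merged into one kernel-verified Lean document; each statement's English description precedes it below -/
import Mathlib

section
/- Let n ≥ 2 be an integer and define P_n(r,t) = t^{−n/2} exp(−(n−1)² t/4 − r²/(4t) − (n−1)r/2) · (1+r+t)^{(n−3)/2} · (1+r) for r, t > 0. Then there exists a constant C > 0 (depending only on n) such that C^{-1} r^{(n−5)/2} e^{−(n−1)r/2} e^{−r²/4} ≤ ∫₀^1 P_n(r,t)/t dt ≤ C r^{(n−5)/2} e^{−(n−1)r/2} e^{−r²/4} for all r ≥ 1. -/
open MeasureTheory Real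

open MeasureTheory Real Set

namespace K1Aux2

lemma pow_le_fact_mul_exp (K : ℕ) {x : ℝ} (hx : 0 ≤ x) :
    x ^ K ≤ (K.factorial : ℝ) * Real.exp x := by
  have h1 : x ^ K / (K.factorial : ℝ) ≤ Real.exp x :=
    le_trans (Finset.single_le_sum (f := fun i => x ^ i / (i.factorial : ℝ))
      (fun i _ => by positivity) (Finset.self_mem_range_succ K))
      (Real.sum_le_exp_of_nonneg hx _)
  have hK : (0:ℝ) < K.factorial := by positivity
  rw [div_le_iff₀ hK] at h1
  linarith [h1, mul_comm (Real.exp x) (K.factorial : ℝ)]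

lemma ptwise_upper (μ : ℝ) (K : ℕ) (hμ0 : 0 ≤ μ) (hμK : μ ≤ K) {a t : ℝ}
    (ha : 1/4 ≤ a) (ht0 : 0 < t) (ht1 : t ≤ 1) :
    t ^ (-μ) * Real.exp (-(a/t)) ≤
      ((K.factorial : ℝ) * 16 ^ K + 2 ^ μ) * Real.exp (a * (t - 2)) := by
  have ha0 : 0 < a := lt_of_lt_of_le (by norm_num) ha
  set q : ℝ := a * (1 - t)^2 / t with hq
  have hq0 : 0 ≤ q := by positivity
  have hsplit : -(a/t) = a * (t - 2) + (-q) := by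
    rw [hq]
    field_simp
    ring
  rw [hsplit, Real.exp_add]
  rw [show t ^ (-μ) * (Real.exp (a*(t-2)) * Real.exp (-q))
      = (t ^ (-μ) * Real.exp (-q)) * Real.exp (a*(t-2)) by ring]
  have hpos : (0:ℝ) < Real.exp (a * (t-2)) := Real.exp_pos _
  apply mul_le_mul_of_nonneg_right _ hpos.le
  have hfact : (0:ℝ) ≤ (K.factorial : ℝ) * 16 ^ K := by positivity
  have h2μ : (0:ℝ) ≤ 2 ^ μ := by positivity
  rcases le_or_gt (1/2 : ℝ) t with hhalf | hhalf
  · have h1 : t ^ (-μ) ≤ 2 ^ μ := by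
      rw [Real.rpow_neg ht0.le, ← Real.inv_rpow ht0.le]
      apply Real.rpow_le_rpow (by positivity) _ hμ0
      rw [inv_le_comm₀ ht0 (by norm_num)]
      linarith
    have h2 : Real.exp (-q) ≤ 1 := Real.exp_le_one_iff.mpr (by linarith)
    calc t ^ (-μ) * Real.exp (-q) ≤ 2 ^ μ * 1 :=
          mul_le_mul h1 h2 (Real.exp_pos _).le (by positivity)
      _ ≤ (K.factorial : ℝ) * 16 ^ K + 2 ^ μ := by linarith
  · have h1t : (1/2:ℝ) ≤ 1 - t := by linarith
    have h2t : (1/4:ℝ) ≤ (1-t)^2 := by nlinarith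
    have hqge : 1/(16*t) ≤ q := by
      rw [hq, div_le_div_iff₀ (by positivity) ht0]
      nlinarith [mul_le_mul ha h2t (by norm_num : (0:ℝ) ≤ 1/4) ha0.le, ht0.le]
    have h2 : Real.exp (-q) ≤ Real.exp (-(1/(16*t))) := by
      apply Real.exp_le_exp.mpr; linarith
    have h3 : Real.exp (-(1/(16*t))) ≤ (K.factorial : ℝ) * (16*t)^K := by
      have h := pow_le_fact_mul_exp K (x := 1/(16*t)) (by positivity)
      rw [one_div, inv_pow] at h
      rw [Real.exp_neg, inv_le_comm₀ (Real.exp_pos _) (by positivity), mul_inv]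
      calc ((K.factorial:ℝ))⁻¹ * ((16*t)^K)⁻¹
          ≤ ((K.factorial:ℝ))⁻¹ * ((K.factorial : ℝ) * Real.exp ((16*t)⁻¹)) := by
            apply mul_le_mul_of_nonneg_left h (by positivity)
        _ = Real.exp ((16*t)⁻¹) := by
            rw [← mul_assoc, inv_mul_cancel₀ (by positivity), one_mul]
        _ = Real.exp (1/(16*t)) := by rw [one_div]
    calc t ^ (-μ) * Real.exp (-q)
        ≤ t ^ (-μ) * ((K.factorial : ℝ) * (16*t)^K) :=
          mul_le_mul_of_nonneg_left (h2.trans h3) (by positivity)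
      _ = (K.factorial : ℝ) * 16 ^ K * (t ^ (-μ) * t ^ (K:ℝ)) := by
          rw [mul_pow, Real.rpow_natCast]; ring
      _ = (K.factorial : ℝ) * 16 ^ K * t ^ ((K:ℝ) - μ) := by
          rw [← Real.rpow_add ht0]; ring_nf
      _ ≤ (K.factorial : ℝ) * 16 ^ K * 1 := by
          apply mul_le_mul_of_nonneg_left (Real.rpow_le_one ht0.le ht1 (by linarith)) hfact
      _ ≤ (K.factorial : ℝ) * 16 ^ K + 2 ^ μ := by linarith

end K1Aux2
open MeasureTheory Real Set

namespace K1Aux3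

lemma integral_exp_linear {a : ℝ} (ha : 0 < a) :
    ∫ t in Ioc (0:ℝ) 1, Real.exp (a * (t - 2)) =
      (Real.exp (-a) - Real.exp (-(2*a))) / a := by
  have hcont : Continuous fun t : ℝ => Real.exp (a * (t - 2)) := by continuity
  have hder : ∀ t ∈ uIcc (0:ℝ) 1,
      HasDerivAt (fun t => Real.exp (a * (t - 2)) / a) (Real.exp (a * (t - 2))) t := by
    intro t _
    have h1 : HasDerivAt (fun t : ℝ => a * (t - 2)) a t := by
      simpa using ((hasDerivAt_id t).sub_const 2).const_mul a
    have h3 := ((Real.hasDerivAt_exp (a * (t - 2))).comp t h1).div_const a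
    rw [mul_div_cancel_right₀ _ ha.ne'] at h3
    exact h3
  have := intervalIntegral.integral_eq_sub_of_hasDerivAt hder (hcont.intervalIntegrable 0 1)
  rw [← intervalIntegral.integral_of_le zero_le_one, this]
  norm_num
  ring_nf

variable {μD : ℝ}

lemma integrableOn_majorant (D a : ℝ) :
    IntegrableOn (fun t : ℝ => D * Real.exp (a * (t - 2))) (Ioc 0 1) := by
  have hcont : Continuous fun t : ℝ => D * Real.exp (a * (t - 2)) := by continuity
  exact (hcont.continuousOn.integrableOn_compact isCompact_Icc).mono_set Ioc_subset_Icc_self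

lemma f_meas (m : ℝ) (a : ℝ) :
    Measurable (fun t : ℝ => t ^ (-m) * Real.exp (-(a/t))) := by
  fun_prop

lemma integrableOn_f (m : ℝ) (K : ℕ) (hm0 : 0 ≤ m) (hmK : m ≤ K) {a : ℝ}
    (ha : 1/4 ≤ a) :
    IntegrableOn (fun t : ℝ => t ^ (-m) * Real.exp (-(a/t))) (Ioc 0 1) := by
  set D : ℝ := (K.factorial : ℝ) * 16 ^ K + 2 ^ m with hD
  apply Integrable.mono' (integrableOn_majorant D a)
    ((f_meas m a).aestronglyMeasurable)
  rw [ae_restrict_iff' measurableSet_Ioc]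
  filter_upwards with t ht
  rcases ht with ⟨ht0, ht1⟩
  rw [Real.norm_eq_abs, abs_of_nonneg (by positivity)]
  exact K1Aux2.ptwise_upper m K hm0 hmK ha ht0 ht1

end K1Aux3
namespace K1Aux4
open MeasureTheory Real Set

lemma J_upper (m : ℝ) (K : ℕ) (hm0 : 0 ≤ m) (hmK : m ≤ K) {a : ℝ}
    (ha : 1/4 ≤ a) :
    ∫ t in Ioc (0:ℝ) 1, t ^ (-m) * Real.exp (-(a/t)) ≤
      ((K.factorial : ℝ) * 16 ^ K + 2 ^ m) * (Real.exp (-a) / a) := by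
  have ha0 : 0 < a := lt_of_lt_of_le (by norm_num) ha
  set D : ℝ := (K.factorial : ℝ) * 16 ^ K + 2 ^ m with hD
  have hDpos : 0 < D := by positivity
  calc ∫ t in Ioc (0:ℝ) 1, t ^ (-m) * Real.exp (-(a/t))
      ≤ ∫ t in Ioc (0:ℝ) 1, D * Real.exp (a * (t-2)) := by
        apply setIntegral_mono_on (K1Aux3.integrableOn_f m K hm0 hmK ha)
          (K1Aux3.integrableOn_majorant D a) measurableSet_Ioc
        intro t ht
        exact K1Aux2.ptwise_upper m K hm0 hmK ha ht.1 ht.2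
    _ = D * ((Real.exp (-a) - Real.exp (-(2*a))) / a) := by
        rw [integral_const_mul, K1Aux3.integral_exp_linear ha0]
    _ ≤ D * (Real.exp (-a) / a) := by
        have hexp : Real.exp (-(2*a)) ≥ 0 := (Real.exp_pos _).le
        gcongr
        linarith
    
lemma J_lower (m : ℝ) (hm0 : 0 ≤ m) {a : ℝ} (ha : 1/4 ≤ a)
    (hint : IntegrableOn (fun t : ℝ => t ^ (-m) * Real.exp (-(a/t))) (Ioc 0 1)) :
    Real.exp (-1) / 5 * (Real.exp (-a) / a) ≤
      ∫ t in Ioc (0:ℝ) 1, t ^ (-m) * Real.exp (-(a/t)) := by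
  have ha0 : 0 < a := lt_of_lt_of_le (by norm_num) ha
  set t₀ : ℝ := a / (a+1) with ht₀
  have ht₀0 : 0 < t₀ := by positivity
  have ht₀1 : t₀ < 1 := by rw [ht₀, div_lt_one (by linarith)]; linarith
  have hnn : 0 ≤ᵐ[volume.restrict (Ioc (0:ℝ) 1)]
      fun t : ℝ => t ^ (-m) * Real.exp (-(a/t)) := by
    have h : ∀ᵐ t ∂(volume.restrict (Ioc (0:ℝ) 1)), 0 ≤ t ^ (-m) * Real.exp (-(a/t)) := by
      rw [ae_restrict_iff' measurableSet_Ioc]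
      filter_upwards with t ht
      have := ht.1
      positivity
    exact h
  have hsub : (Ioc t₀ 1 : Set ℝ) ⊆ Ioc 0 1 := Ioc_subset_Ioc ht₀0.le le_rfl
  have step1 : ∫ t in Ioc t₀ 1, t ^ (-m) * Real.exp (-(a/t)) ≤
      ∫ t in Ioc (0:ℝ) 1, t ^ (-m) * Real.exp (-(a/t)) :=
    setIntegral_mono_set hint hnn (HasSubset.Subset.eventuallyLE hsub)
  have step2 : Real.exp (-(a+1)) * ((volume (Ioc t₀ 1)).toReal) ≤
      ∫ t in Ioc t₀ 1, t ^ (-m) * Real.exp (-(a/t)) := by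
    apply setIntegral_ge_of_const_le_real measurableSet_Ioc (by rw [Real.volume_Ioc]; exact ENNReal.ofReal_ne_top)
    · intro t ht
      have h1 : (1:ℝ) ≤ t ^ (-m) :=
        Real.one_le_rpow_of_pos_of_le_one_of_nonpos (lt_trans ht₀0 ht.1) ht.2 (by linarith)
      have h2 : Real.exp (-(a+1)) ≤ Real.exp (-(a/t)) := by
        apply Real.exp_le_exp.mpr
        have : a / t ≤ a + 1 := by
          rw [div_le_iff₀ (lt_trans ht₀0 ht.1)]
          calc a = (a+1) * t₀ := by rw [ht₀]; field_simp
            _ ≤ (a+1) * t := by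
              apply mul_le_mul_of_nonneg_left ht.1.le (by linarith)
        linarith
      calc Real.exp (-(a+1)) = 1 * Real.exp (-(a+1)) := (one_mul _).symm
        _ ≤ t ^ (-m) * Real.exp (-(a/t)) :=
          mul_le_mul h1 h2 (Real.exp_pos _).le (by positivity)
    · exact hint.mono_set hsub
  have hvol : (volume (Ioc t₀ 1)).toReal = 1 - t₀ := by
    rw [Real.volume_Ioc, ENNReal.toReal_ofReal (by linarith)]
  have hkey : Real.exp (-1) / 5 * (Real.exp (-a) / a) ≤ Real.exp (-(a+1)) * (1 - t₀) := by
    have h1 : Real.exp (-(a+1)) = Real.exp (-a) * Real.exp (-1) := by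
      rw [← Real.exp_add]; ring_nf
    have h2 : (1:ℝ) - t₀ = 1 / (a+1) := by rw [ht₀]; field_simp; ring
    have h3 : 1 / (a+1) ≥ 1 / (5*a) := by
      apply one_div_le_one_div_of_le (by linarith) (by linarith)
    rw [h1, h2]
    calc Real.exp (-1) / 5 * (Real.exp (-a) / a)
        = Real.exp (-a) * Real.exp (-1) * (1/(5*a)) := by ring
      _ ≤ Real.exp (-a) * Real.exp (-1) * (1/(a+1)) := by
          apply mul_le_mul_of_nonneg_left h3 (by positivity)
  calc Real.exp (-1) / 5 * (Real.exp (-a) / a) ≤ Real.exp (-(a+1)) * (1 - t₀) := hkey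
    _ = Real.exp (-(a+1)) * ((volume (Ioc t₀ 1)).toReal) := by rw [hvol]
    _ ≤ _ := step2.trans step1

end K1Aux4
namespace K1Aux5
open MeasureTheory Real Set

lemma sandwich (n : ℕ) (hn : 2 ≤ n) {r t : ℝ} (hr : 1 ≤ r) (ht0 : 0 < t) (ht1 : t ≤ 1) :
    ((Real.exp (-(((n:ℝ)-1)^2/4)) * (3:ℝ) ^ (-|((n:ℝ)-3)/2|)) *
        (r ^ ((((n:ℝ)-3)/2) + 1) * Real.exp (-(((n:ℝ)-1)*r/2)))) *
      (t ^ (-((n:ℝ)/2 + 1)) * Real.exp (-((r^2/4)/t)))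
      ≤ (t ^ (-(n:ℝ)/2) *
            Real.exp (-(((n:ℝ)-1)^2 * t / 4) - r^2/(4*t) - ((n:ℝ)-1)*r/2) *
            (1+r+t) ^ (((n:ℝ)-3)/2) * (1+r))/t ∧
    (t ^ (-(n:ℝ)/2) *
        Real.exp (-(((n:ℝ)-1)^2 * t / 4) - r^2/(4*t) - ((n:ℝ)-1)*r/2) *
        (1+r+t) ^ (((n:ℝ)-3)/2) * (1+r))/t
      ≤ ((2 * (3:ℝ) ^ (|((n:ℝ)-3)/2|)) *
          (r ^ ((((n:ℝ)-3)/2) + 1) * Real.exp (-(((n:ℝ)-1)*r/2)))) *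
        (t ^ (-((n:ℝ)/2 + 1)) * Real.exp (-((r^2/4)/t))) := by
  have hr0 : (0:ℝ) < r := lt_of_lt_of_le one_pos hr
  set p : ℝ := ((n:ℝ)-3)/2 with hp
  have htne : t ≠ 0 := ht0.ne'
  -- rewrite the integrand
  have hrpow : t ^ (-(n:ℝ)/2) = t ^ (-((n:ℝ)/2 + 1)) * t := by
    rw [show -(n:ℝ)/2 = (-((n:ℝ)/2 + 1)) + 1 by ring, Real.rpow_add ht0, Real.rpow_one]
  have hexp : Real.exp (-(((n:ℝ)-1)^2 * t / 4) - r^2/(4*t) - ((n:ℝ)-1)*r/2)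
      = Real.exp (-(((n:ℝ)-1)^2 * t / 4)) * Real.exp (-((r^2/4)/t)) *
        Real.exp (-(((n:ℝ)-1)*r/2)) := by
    rw [← Real.exp_add, ← Real.exp_add]
    congr 1
    rw [div_div]
    ring
  have hFeq : (t ^ (-(n:ℝ)/2) *
        Real.exp (-(((n:ℝ)-1)^2 * t / 4) - r^2/(4*t) - ((n:ℝ)-1)*r/2) *
        (1+r+t) ^ p * (1+r))/t
      = (Real.exp (-(((n:ℝ)-1)^2 * t / 4)) * (1+r+t) ^ p * (1+r)) *
        Real.exp (-(((n:ℝ)-1)*r/2)) *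
        (t ^ (-((n:ℝ)/2 + 1)) * Real.exp (-((r^2/4)/t))) := by
    rw [hexp, hrpow]
    field_simp
  -- bracket bounds
  set B : ℝ := Real.exp (-(((n:ℝ)-1)^2 * t / 4)) * (1+r+t) ^ p * (1+r) with hB
  set ρ : ℝ := (1+r+t)/r with hρ
  have hρ1 : (1:ℝ) ≤ ρ := by rw [hρ, le_div_iff₀ hr0]; linarith
  have hρ3 : ρ ≤ 3 := by rw [hρ, div_le_iff₀ hr0]; linarith
  have hρ0 : (0:ℝ) < ρ := lt_of_lt_of_le one_pos hρ1
  have hbase : (1+r+t) = ρ * r := by rw [hρ]; field_simp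
  have hPsplit : (1+r+t) ^ p = ρ ^ p * r ^ p := by
    rw [hbase, Real.mul_rpow hρ0.le hr0.le]
  have hρp_up : ρ ^ p ≤ 3 ^ |p| := by
    rcases le_or_gt 0 p with h | h
    · rw [abs_of_nonneg h]
      exact Real.rpow_le_rpow hρ0.le hρ3 h
    · calc ρ ^ p ≤ 1 ^ p := Real.rpow_le_rpow_of_nonpos one_pos hρ1 h.le
        _ = 1 := Real.one_rpow p
        _ ≤ 3 ^ |p| := Real.one_le_rpow (by norm_num) (abs_nonneg p)
  have hρp_lo : (3:ℝ) ^ (-|p|) ≤ ρ ^ p := by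
    rcases le_or_gt 0 p with h | h
    · calc (3:ℝ) ^ (-|p|) ≤ 1 :=
          Real.rpow_le_one_of_one_le_of_nonpos (by norm_num) (neg_nonpos.mpr (abs_nonneg p))
        _ = 1 ^ p := (Real.one_rpow p).symm
        _ ≤ ρ ^ p := Real.rpow_le_rpow (by norm_num) hρ1 h
    · rw [abs_of_neg h, neg_neg]
      exact Real.rpow_le_rpow_of_nonpos hρ0 hρ3 h.le
  have hu_up : Real.exp (-(((n:ℝ)-1)^2 * t / 4)) ≤ 1 := by
    apply Real.exp_le_one_iff.mpr
    have h1 : (0:ℝ) ≤ ((n:ℝ)-1)^2 * t := by positivity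
    linarith
  have hu_lo : Real.exp (-(((n:ℝ)-1)^2/4)) ≤ Real.exp (-(((n:ℝ)-1)^2 * t / 4)) := by
    apply Real.exp_le_exp.mpr
    have h1 : ((n:ℝ)-1)^2 * t ≤ ((n:ℝ)-1)^2 := by nlinarith [sq_nonneg ((n:ℝ)-1)]
    linarith
  have hrp_pos : (0:ℝ) < r ^ p := Real.rpow_pos_of_pos hr0 p
  have hrp1 : r ^ (p + 1) = r ^ p * r := Real.rpow_add_one hr0.ne' p
  have hB_up : B ≤ (2 * (3:ℝ) ^ |p|) * r ^ (p + 1) := by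
    rw [hB, hPsplit, hrp1]
    have h1 : (1:ℝ) + r ≤ 2 * r := by linarith
    calc Real.exp (-(((n:ℝ)-1)^2 * t / 4)) * (ρ ^ p * r ^ p) * (1+r)
        ≤ 1 * (3 ^ |p| * r ^ p) * (2*r) := by
          apply mul_le_mul _ h1 (by linarith) (by positivity)
          apply mul_le_mul hu_up _ (by positivity) zero_le_one
          exact mul_le_mul_of_nonneg_right hρp_up hrp_pos.le
      _ = (2 * (3:ℝ) ^ |p|) * (r ^ p * r) := by ring
  have hB_lo : (Real.exp (-(((n:ℝ)-1)^2/4)) * (3:ℝ) ^ (-|p|)) * r ^ (p + 1) ≤ B := by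
    rw [hB, hPsplit, hrp1]
    calc (Real.exp (-(((n:ℝ)-1)^2/4)) * (3:ℝ) ^ (-|p|)) * (r ^ p * r)
        = (Real.exp (-(((n:ℝ)-1)^2/4)) * ((3:ℝ) ^ (-|p|) * r ^ p)) * r := by ring
      _ ≤ (Real.exp (-(((n:ℝ)-1)^2 * t / 4)) * (ρ ^ p * r ^ p)) * (1+r) := by
          apply mul_le_mul _ (by linarith) hr0.le (by positivity)
          apply mul_le_mul hu_lo _ (by positivity) (Real.exp_pos _).le
          exact mul_le_mul_of_nonneg_right hρp_lo hrp_pos.le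
      _ = Real.exp (-(((n:ℝ)-1)^2 * t / 4)) * (ρ ^ p * r ^ p) * (1+r) := by ring
  have hZ0 : (0:ℝ) ≤ Real.exp (-(((n:ℝ)-1)*r/2)) *
      (t ^ (-((n:ℝ)/2 + 1)) * Real.exp (-((r^2/4)/t))) := by positivity
  constructor
  · calc ((Real.exp (-(((n:ℝ)-1)^2/4)) * (3:ℝ) ^ (-|p|)) *
        (r ^ (p + 1) * Real.exp (-(((n:ℝ)-1)*r/2)))) *
          (t ^ (-((n:ℝ)/2 + 1)) * Real.exp (-((r^2/4)/t)))
        = ((Real.exp (-(((n:ℝ)-1)^2/4)) * (3:ℝ) ^ (-|p|)) * r ^ (p + 1)) *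
          (Real.exp (-(((n:ℝ)-1)*r/2)) *
            (t ^ (-((n:ℝ)/2 + 1)) * Real.exp (-((r^2/4)/t)))) := by ring
      _ ≤ B * (Real.exp (-(((n:ℝ)-1)*r/2)) *
            (t ^ (-((n:ℝ)/2 + 1)) * Real.exp (-((r^2/4)/t)))) :=
          mul_le_mul_of_nonneg_right hB_lo hZ0
      _ = _ := by rw [hFeq]; ring
  · calc (t ^ (-(n:ℝ)/2) *
        Real.exp (-(((n:ℝ)-1)^2 * t / 4) - r^2/(4*t) - ((n:ℝ)-1)*r/2) *
        (1+r+t) ^ p * (1+r))/t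
        = B * (Real.exp (-(((n:ℝ)-1)*r/2)) *
            (t ^ (-((n:ℝ)/2 + 1)) * Real.exp (-((r^2/4)/t)))) := by rw [hFeq]; ring
      _ ≤ ((2 * (3:ℝ) ^ |p|) * r ^ (p + 1)) *
          (Real.exp (-(((n:ℝ)-1)*r/2)) *
            (t ^ (-((n:ℝ)/2 + 1)) * Real.exp (-((r^2/4)/t)))) :=
          mul_le_mul_of_nonneg_right hB_up hZ0
      _ = _ := by ring

end K1Aux5


/-- Large-`r` asymptotics of the short-time logarithmic kernel `K₁(r) = ∫₀^1 P_n(r,t)/t dt`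
built from the Davies–Mandouvalos comparison function: there is `C > 0` with
`C⁻¹ r^{(n−5)/2} e^{−(n−1)r/2} e^{−r²/4} ≤ K₁(r) ≤ C r^{(n−5)/2} e^{−(n−1)r/2} e^{−r²/4}`
for all `r ≥ 1`. -/
theorem log_kernel_K1_asymp_large (n : ℕ) (hn : 2 ≤ n) :
    ∃ C : ℝ, 0 < C ∧ ∀ r : ℝ, 1 ≤ r →
      (C⁻¹ * r ^ (((n : ℝ) - 5)/2) * Real.exp (-((n : ℝ) - 1) * r / 2) *
          Real.exp (-(r^2)/4) ≤
        ∫ t in Set.Ioc (0 : ℝ) 1,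
          (t ^ (-(n : ℝ)/2) *
            Real.exp (-(((n : ℝ) - 1)^2 * t / 4) - r^2 / (4 * t) - ((n : ℝ) - 1) * r / 2) *
            (1 + r + t) ^ (((n : ℝ) - 3)/2) * (1 + r)) / t) ∧
      ((∫ t in Set.Ioc (0 : ℝ) 1,
          (t ^ (-(n : ℝ)/2) *
            Real.exp (-(((n : ℝ) - 1)^2 * t / 4) - r^2 / (4 * t) - ((n : ℝ) - 1) * r / 2) *
            (1 + r + t) ^ (((n : ℝ) - 3)/2) * (1 + r)) / t) ≤
        C * r ^ (((n : ℝ) - 5)/2) * Real.exp (-((n : ℝ) - 1) * r / 2) *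
          Real.exp (-(r^2)/4)) := by
  have hn2 : (2:ℝ) ≤ (n:ℝ) := by exact_mod_cast hn
  have hm0 : (0:ℝ) ≤ (n:ℝ)/2 + 1 := by positivity
  have hmK : (n:ℝ)/2 + 1 ≤ (n:ℕ) := by push_cast; linarith
  have hc₁0 : (0:ℝ) < Real.exp (-(((n:ℝ)-1)^2/4)) * (3:ℝ) ^ (-|((n:ℝ)-3)/2|) := by positivity
  have hc₂0 : (0:ℝ) < 2 * (3:ℝ) ^ |((n:ℝ)-3)/2| := by positivity
  have hD0 : (0:ℝ) < (n.factorial : ℝ) * 16 ^ n + 2 ^ ((n:ℝ)/2 + 1) := by positivity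
  set c₁ : ℝ := Real.exp (-(((n:ℝ)-1)^2/4)) * (3:ℝ) ^ (-|((n:ℝ)-3)/2|)
  set c₂ : ℝ := 2 * (3:ℝ) ^ |((n:ℝ)-3)/2|
  set D : ℝ := (n.factorial : ℝ) * 16 ^ n + 2 ^ ((n:ℝ)/2 + 1)
  have hCl0 : (0:ℝ) < 4 * (c₁ * (Real.exp (-1) / 5)) := by
    have : (0:ℝ) < Real.exp (-1) / 5 := by positivity
    nlinarith
  have hCu0 : (0:ℝ) < 4 * (c₂ * D) := by nlinarith
  refine ⟨max (4 * (c₂ * D)) (4 * (c₁ * (Real.exp (-1) / 5)))⁻¹,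
    lt_max_of_lt_left hCu0, ?_⟩
  set C : ℝ := max (4 * (c₂ * D)) (4 * (c₁ * (Real.exp (-1) / 5)))⁻¹ with hC
  have hC0 : 0 < C := lt_max_of_lt_left hCu0
  have hCinv : C⁻¹ ≤ 4 * (c₁ * (Real.exp (-1) / 5)) := by
    rw [inv_le_comm₀ hC0 hCl0]
    exact le_max_right _ _
  intro r hr
  have hr0 : (0:ℝ) < r := lt_of_lt_of_le one_pos hr
  have ha : (1/4 : ℝ) ≤ r^2/4 := by nlinarith
  -- J and its bounds
  have hgint : IntegrableOn
      (fun t : ℝ => t ^ (-((n:ℝ)/2 + 1)) * Real.exp (-(r^2/4/t))) (Set.Ioc 0 1) :=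
    K1Aux3.integrableOn_f ((n:ℝ)/2 + 1) n hm0 hmK ha
  have hJup := K1Aux4.J_upper ((n:ℝ)/2 + 1) n hm0 hmK ha
  have hJlo := K1Aux4.J_lower ((n:ℝ)/2 + 1) hm0 ha hgint
  have hJ0 : 0 ≤ ∫ t in Set.Ioc (0:ℝ) 1, t ^ (-((n:ℝ)/2 + 1)) * Real.exp (-(r^2/4/t)) :=
    le_trans (by positivity) hJlo
  -- the full integrand
  set F : ℝ → ℝ := fun t =>
    (t ^ (-(n : ℝ)/2) *
      Real.exp (-(((n : ℝ) - 1)^2 * t / 4) - r^2 / (4 * t) - ((n : ℝ) - 1) * r / 2) *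
      (1 + r + t) ^ (((n : ℝ) - 3)/2) * (1 + r)) / t with hF
  have hsand : ∀ t ∈ Set.Ioc (0:ℝ) 1,
      (c₁ * (r ^ ((((n:ℝ)-3)/2) + 1) * Real.exp (-(((n:ℝ)-1)*r/2)))) *
          (t ^ (-((n:ℝ)/2 + 1)) * Real.exp (-(r^2/4/t))) ≤ F t ∧
      F t ≤ (c₂ * (r ^ ((((n:ℝ)-3)/2) + 1) * Real.exp (-(((n:ℝ)-1)*r/2)))) *
          (t ^ (-((n:ℝ)/2 + 1)) * Real.exp (-(r^2/4/t))) := by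
    intro t ht
    have h := K1Aux5.sandwich n hn hr ht.1 ht.2
    exact ⟨h.1, h.2⟩
  -- integrability of F
  have hFmeas : AEStronglyMeasurable F ((volume : Measure ℝ).restrict (Set.Ioc 0 1)) := by
    apply Measurable.aestronglyMeasurable
    rw [hF]
    fun_prop
  have hFint : IntegrableOn F (Set.Ioc (0:ℝ) 1) := by
    apply Integrable.mono'
      (hgint.const_mul (c₂ * (r ^ ((((n:ℝ)-3)/2) + 1) * Real.exp (-(((n:ℝ)-1)*r/2)))))
      hFmeas
    rw [ae_restrict_iff' measurableSet_Ioc]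
    filter_upwards with t ht
    have hF0 : 0 ≤ F t := by
      rw [hF]
      apply div_nonneg _ ht.1.le
      have h1 : (0:ℝ) ≤ 1+r+t := by linarith [ht.1]
      apply mul_nonneg (mul_nonneg (mul_nonneg (Real.rpow_nonneg ht.1.le _)
        (Real.exp_pos _).le) (Real.rpow_nonneg h1 _)) (by linarith)
    rw [Real.norm_eq_abs, abs_of_nonneg hF0]
    exact (hsand t ht).2
  -- integral comparison
  have hup : (∫ t in Set.Ioc (0:ℝ) 1, F t) ≤
      (c₂ * (r ^ ((((n:ℝ)-3)/2) + 1) * Real.exp (-(((n:ℝ)-1)*r/2)))) *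
        ∫ t in Set.Ioc (0:ℝ) 1, t ^ (-((n:ℝ)/2 + 1)) * Real.exp (-(r^2/4/t)) := by
    rw [← integral_const_mul]
    exact setIntegral_mono_on hFint (hgint.const_mul _) measurableSet_Ioc
      (fun t ht => (hsand t ht).2)
  have hlo : (c₁ * (r ^ ((((n:ℝ)-3)/2) + 1) * Real.exp (-(((n:ℝ)-1)*r/2)))) *
        (∫ t in Set.Ioc (0:ℝ) 1, t ^ (-((n:ℝ)/2 + 1)) * Real.exp (-(r^2/4/t))) ≤
      ∫ t in Set.Ioc (0:ℝ) 1, F t := by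
    rw [← integral_const_mul]
    exact setIntegral_mono_on (hgint.const_mul _) hFint measurableSet_Ioc
      (fun t ht => (hsand t ht).1)
  -- algebraic identities
  have hE1 : Real.exp (-(((n:ℝ)-1)*r/2)) = Real.exp (-((n : ℝ) - 1) * r / 2) := by
    congr 1; ring
  have hE2 : Real.exp (-(r^2/4)) = Real.exp (-(r^2)/4) := by
    congr 1; ring
  have hrs : r ^ ((((n:ℝ)-3)/2) + 1) = r ^ (((n:ℝ)-5)/2) * r^2 := by
    rw [← Real.rpow_natCast r 2, ← Real.rpow_add hr0]
    congr 1
    push_cast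
    ring
  have hRE0 : (0:ℝ) ≤ r ^ (((n : ℝ) - 5)/2) * Real.exp (-((n : ℝ) - 1) * r / 2) *
      Real.exp (-(r^2)/4) := by positivity
  constructor
  · -- lower bound
    have step : (c₁ * (r ^ ((((n:ℝ)-3)/2) + 1) * Real.exp (-(((n:ℝ)-1)*r/2)))) *
        (Real.exp (-1) / 5 * (Real.exp (-(r^2/4)) / (r^2/4))) ≤
        (c₁ * (r ^ ((((n:ℝ)-3)/2) + 1) * Real.exp (-(((n:ℝ)-1)*r/2)))) *
        (∫ t in Set.Ioc (0:ℝ) 1, t ^ (-((n:ℝ)/2 + 1)) * Real.exp (-(r^2/4/t))) := by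
      apply mul_le_mul_of_nonneg_left hJlo
      positivity
    have heq : (c₁ * (r ^ ((((n:ℝ)-3)/2) + 1) * Real.exp (-(((n:ℝ)-1)*r/2)))) *
        (Real.exp (-1) / 5 * (Real.exp (-(r^2/4)) / (r^2/4))) =
        (4 * (c₁ * (Real.exp (-1) / 5))) * (r ^ (((n : ℝ) - 5)/2) *
          Real.exp (-((n : ℝ) - 1) * r / 2) * Real.exp (-(r^2)/4)) := by
      rw [← hE1, ← hE2, hrs]
      have : (0:ℝ) < r^2 := by positivity
      field_simp
    calc C⁻¹ * r ^ (((n : ℝ) - 5)/2) * Real.exp (-((n : ℝ) - 1) * r / 2) *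
        Real.exp (-(r^2)/4)
        = C⁻¹ * (r ^ (((n : ℝ) - 5)/2) * Real.exp (-((n : ℝ) - 1) * r / 2) *
          Real.exp (-(r^2)/4)) := by ring
      _ ≤ (4 * (c₁ * (Real.exp (-1) / 5))) * (r ^ (((n : ℝ) - 5)/2) *
          Real.exp (-((n : ℝ) - 1) * r / 2) * Real.exp (-(r^2)/4)) :=
          mul_le_mul_of_nonneg_right hCinv hRE0
      _ = (c₁ * (r ^ ((((n:ℝ)-3)/2) + 1) * Real.exp (-(((n:ℝ)-1)*r/2)))) *
          (Real.exp (-1) / 5 * (Real.exp (-(r^2/4)) / (r^2/4))) := heq.symm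
      _ ≤ _ := step.trans hlo
  · -- upper bound
    have step : (c₂ * (r ^ ((((n:ℝ)-3)/2) + 1) * Real.exp (-(((n:ℝ)-1)*r/2)))) *
        (∫ t in Set.Ioc (0:ℝ) 1, t ^ (-((n:ℝ)/2 + 1)) * Real.exp (-(r^2/4/t))) ≤
        (c₂ * (r ^ ((((n:ℝ)-3)/2) + 1) * Real.exp (-(((n:ℝ)-1)*r/2)))) *
        (D * (Real.exp (-(r^2/4)) / (r^2/4))) := by
      apply mul_le_mul_of_nonneg_left hJup
      positivity
    have heq : (c₂ * (r ^ ((((n:ℝ)-3)/2) + 1) * Real.exp (-(((n:ℝ)-1)*r/2)))) *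
        (D * (Real.exp (-(r^2/4)) / (r^2/4))) =
        (4 * (c₂ * D)) * (r ^ (((n : ℝ) - 5)/2) *
          Real.exp (-((n : ℝ) - 1) * r / 2) * Real.exp (-(r^2)/4)) := by
      rw [← hE1, ← hE2, hrs]
      have : (0:ℝ) < r^2 := by positivity
      field_simp
    calc (∫ t in Set.Ioc (0:ℝ) 1, F t) ≤ _ := hup.trans step
      _ = (4 * (c₂ * D)) * (r ^ (((n : ℝ) - 5)/2) *
          Real.exp (-((n : ℝ) - 1) * r / 2) * Real.exp (-(r^2)/4)) := heq
      _ ≤ C * (r ^ (((n : ℝ) - 5)/2) *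
          Real.exp (-((n : ℝ) - 1) * r / 2) * Real.exp (-(r^2)/4)) :=
          mul_le_mul_of_nonneg_right (le_max_left _ _) hRE0
      _ = C * r ^ (((n : ℝ) - 5)/2) * Real.exp (-((n : ℝ) - 1) * r / 2) *
          Real.exp (-(r^2)/4) := by ring
end

section
/- Let n ≥ 2 be an integer and define P_n(r,t) = t^{−n/2} exp(−(n−1)² t/4 − r²/(4t) − (n−1)r/2) · (1+r+t)^{(n−3)/2} · (1+r) for r, t > 0. Then there exists a constant C > 0 (depending only on n) such that C^{-1} ≤ ∫₁^∞ P_n(r,t)/t dt ≤ C for all 0 < r ≤ 1. -/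
open MeasureTheory Real

/-- Lower constant for the small-`r` kernel bound. -/
noncomputable def K2c0 (n : ℕ) : ℝ :=
  2 ^ (-(n : ℝ)/2) * Real.exp (-(((n : ℝ) - 1)^2 / 2 + 1/4 + ((n : ℝ) - 1)/2)) *
    (4 : ℝ) ^ (-(1 : ℝ)/2) * 1 / 2

lemma K2c0_pos (n : ℕ) : 0 < K2c0 n := by unfold K2c0; positivity

lemma K2_upper_pt (n : ℕ) (hn : 2 ≤ n) (r t : ℝ) (hr : 0 < r) (hr1 : r ≤ 1) (ht : 1 ≤ t) :
    (t ^ (-(n : ℝ)/2) *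
      Real.exp (-(((n : ℝ) - 1)^2 * t / 4) - r^2 / (4 * t) - ((n : ℝ) - 1) * r / 2) *
      (1 + r + t) ^ (((n : ℝ) - 3)/2) * (1 + r)) / t
      ≤ 2 * 3 ^ max (((n : ℝ) - 3)/2) 0 * Real.exp (-(1/4) * t) := by
  have hn2 : (2 : ℝ) ≤ (n : ℝ) := by exact_mod_cast hn
  have ht0 : (0 : ℝ) < t := lt_of_lt_of_le one_pos ht
  set β : ℝ := max (((n : ℝ) - 3)/2) 0 with hβ
  have hβ0 : 0 ≤ β := le_max_right _ _
  have hA : (0 : ℝ) ≤ t ^ (-(n : ℝ)/2) *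
      Real.exp (-(((n : ℝ) - 1)^2 * t / 4) - r^2 / (4 * t) - ((n : ℝ) - 1) * r / 2) *
      (1 + r + t) ^ (((n : ℝ) - 3)/2) * (1 + r) := by positivity
  calc (t ^ (-(n : ℝ)/2) *
      Real.exp (-(((n : ℝ) - 1)^2 * t / 4) - r^2 / (4 * t) - ((n : ℝ) - 1) * r / 2) *
      (1 + r + t) ^ (((n : ℝ) - 3)/2) * (1 + r)) / t
      ≤ t ^ (-(n : ℝ)/2) *
      Real.exp (-(((n : ℝ) - 1)^2 * t / 4) - r^2 / (4 * t) - ((n : ℝ) - 1) * r / 2) *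
      (1 + r + t) ^ (((n : ℝ) - 3)/2) * (1 + r) := div_le_self hA ht
    _ ≤ 1 * Real.exp (-(((n : ℝ) - 1)^2 * t / 4)) * (3 ^ β * t ^ β) * 2 := by
        have h1 : t ^ (-(n : ℝ)/2) ≤ 1 :=
          Real.rpow_le_one_of_one_le_of_nonpos ht
            (by rw [neg_div]; exact neg_nonpos.mpr (by positivity))
        have h2 : Real.exp (-(((n : ℝ) - 1)^2 * t / 4) - r^2 / (4 * t) - ((n : ℝ) - 1) * r / 2)
            ≤ Real.exp (-(((n : ℝ) - 1)^2 * t / 4)) := by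
          apply Real.exp_le_exp.mpr
          have h2a : 0 ≤ r^2 / (4 * t) := by positivity
          have h2b : 0 ≤ ((n : ℝ) - 1) * r / 2 := by
            have : (0:ℝ) ≤ (n : ℝ) - 1 := by linarith
            positivity
          linarith
        have h3 : (1 + r + t) ^ (((n : ℝ) - 3)/2) ≤ 3 ^ β * t ^ β := by
          rcases le_or_gt 0 (((n : ℝ) - 3)/2) with hα | hα
          · rw [hβ, max_eq_left hα]
            calc (1 + r + t) ^ (((n : ℝ) - 3)/2) ≤ (3 * t) ^ (((n : ℝ) - 3)/2) :=
                  Real.rpow_le_rpow (by positivity) (by linarith) hα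
              _ = 3 ^ (((n : ℝ) - 3)/2) * t ^ (((n : ℝ) - 3)/2) :=
                  Real.mul_rpow (by norm_num) ht0.le
          · rw [hβ, max_eq_right hα.le]
            simp only [Real.rpow_zero, mul_one]
            exact Real.rpow_le_one_of_one_le_of_nonpos (by linarith) hα.le
        have h4 : 1 + r ≤ 2 := by linarith
        gcongr
    _ = 2 * 3 ^ β * (t ^ β * Real.exp (-(((n : ℝ) - 1)^2 * t / 4))) := by ring
    _ ≤ 2 * 3 ^ β * (Real.exp (t * β) * Real.exp (-(((n : ℝ) - 1)^2 * t / 4))) := by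
        have hte : t ≤ Real.exp t := by
          have := Real.add_one_le_exp t; linarith
        have : t ^ β ≤ (Real.exp t) ^ β := Real.rpow_le_rpow ht0.le hte hβ0
        rw [← Real.exp_mul] at this
        gcongr
    _ ≤ 2 * 3 ^ β * Real.exp (-(1/4) * t) := by
        rw [← Real.exp_add]
        have hgap : β - ((n : ℝ) - 1)^2 / 4 ≤ -(1/4) := by
          rcases le_or_gt 0 (((n : ℝ) - 3)/2) with hα | hα
          · rw [hβ, max_eq_left hα]; nlinarith [sq_nonneg ((n : ℝ) - 2)]
          · rw [hβ, max_eq_right hα.le]; nlinarith [sq_nonneg ((n : ℝ) - 2)]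
        have harg : t * β + -(((n : ℝ) - 1)^2 * t / 4) ≤ -(1/4) * t := by nlinarith
        gcongr
        

lemma K2_lower_pt (n : ℕ) (hn : 2 ≤ n) (r t : ℝ) (hr : 0 < r) (hr1 : r ≤ 1)
    (ht : t ∈ Set.Ioc (1 : ℝ) 2) :
    K2c0 n ≤
      (t ^ (-(n : ℝ)/2) *
        Real.exp (-(((n : ℝ) - 1)^2 * t / 4) - r^2 / (4 * t) - ((n : ℝ) - 1) * r / 2) *
        (1 + r + t) ^ (((n : ℝ) - 3)/2) * (1 + r)) / t := by
  have hn2 : (2 : ℝ) ≤ (n : ℝ) := by exact_mod_cast hn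
  obtain ⟨ht1, ht2⟩ := ht
  have ht0 : (0 : ℝ) < t := lt_trans one_pos ht1
  have l1 : (2 : ℝ) ^ (-(n : ℝ)/2) ≤ t ^ (-(n : ℝ)/2) :=
    Real.rpow_le_rpow_of_nonpos ht0 ht2 (by rw [neg_div]; exact neg_nonpos.mpr (by positivity))
  have l2 : Real.exp (-(((n : ℝ) - 1)^2 / 2 + 1/4 + ((n : ℝ) - 1)/2))
      ≤ Real.exp (-(((n : ℝ) - 1)^2 * t / 4) - r^2 / (4 * t) - ((n : ℝ) - 1) * r / 2) := by
    apply Real.exp_le_exp.mpr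
    have e1 : ((n : ℝ) - 1)^2 * t / 4 ≤ ((n : ℝ) - 1)^2 / 2 := by nlinarith [sq_nonneg ((n:ℝ)-1)]
    have e2 : r^2 / (4 * t) ≤ 1/4 := by
      rw [div_le_iff₀ (by linarith : (0:ℝ) < 4 * t)]; nlinarith
    have e3 : ((n : ℝ) - 1) * r / 2 ≤ ((n : ℝ) - 1)/2 := by nlinarith
    linarith
  have l3 : (4 : ℝ) ^ (-(1 : ℝ)/2) ≤ (1 + r + t) ^ (((n : ℝ) - 3)/2) := by
    have hB1 : (1 : ℝ) ≤ 1 + r + t := by linarith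
    calc (4 : ℝ) ^ (-(1 : ℝ)/2) ≤ (1 + r + t) ^ (-(1 : ℝ)/2) :=
          Real.rpow_le_rpow_of_nonpos (by linarith) (by linarith) (by norm_num)
      _ ≤ (1 + r + t) ^ (((n : ℝ) - 3)/2) :=
          Real.rpow_le_rpow_of_exponent_le hB1 (by linarith)
  have l4 : (1 : ℝ) ≤ 1 + r := by linarith
  have hP : 2 ^ (-(n : ℝ)/2) * Real.exp (-(((n : ℝ) - 1)^2 / 2 + 1/4 + ((n : ℝ) - 1)/2)) *
      (4 : ℝ) ^ (-(1 : ℝ)/2) * 1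
      ≤ t ^ (-(n : ℝ)/2) *
        Real.exp (-(((n : ℝ) - 1)^2 * t / 4) - r^2 / (4 * t) - ((n : ℝ) - 1) * r / 2) *
        (1 + r + t) ^ (((n : ℝ) - 3)/2) * (1 + r) := by
    gcongr <;> positivity
  unfold K2c0
  exact div_le_div₀ (le_trans (by positivity) hP) hP ht0 ht2

lemma K2_integrable (n : ℕ) (hn : 2 ≤ n) (r : ℝ) (hr : 0 < r) (hr1 : r ≤ 1) :
    IntegrableOn (fun t : ℝ =>
      (t ^ (-(n : ℝ)/2) *
        Real.exp (-(((n : ℝ) - 1)^2 * t / 4) - r^2 / (4 * t) - ((n : ℝ) - 1) * r / 2) *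
        (1 + r + t) ^ (((n : ℝ) - 3)/2) * (1 + r)) / t) (Set.Ioi 1) := by
  apply Integrable.mono'
    (g := fun t : ℝ => 2 * 3 ^ max (((n : ℝ) - 3)/2) 0 * Real.exp (-(1/4) * t))
  · exact (exp_neg_integrableOn_Ioi 1 (by norm_num : (0:ℝ) < 1/4)).const_mul _
  · apply ContinuousOn.aestronglyMeasurable _ measurableSet_Ioi
    have h0 : ∀ t ∈ Set.Ioi (1:ℝ), t ≠ 0 := fun t ht => ne_of_gt (lt_trans one_pos ht)
    apply ContinuousOn.div _ continuousOn_id h0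
    apply ContinuousOn.mul
    apply ContinuousOn.mul
    apply ContinuousOn.mul
    · exact ContinuousOn.rpow_const continuousOn_id (fun t ht => Or.inl (h0 t ht))
    · apply ContinuousOn.rexp
      apply ContinuousOn.sub
      apply ContinuousOn.sub
      · fun_prop
      · exact ContinuousOn.div continuousOn_const (by fun_prop)
          (fun t ht => by simpa using h0 t ht)
      · fun_prop
    · exact ContinuousOn.rpow_const (by fun_prop)
        (fun t ht => Or.inl (by have := lt_trans one_pos (show (1:ℝ) < t from ht); positivity))
    · exact continuousOn_const
  · filter_upwards [ae_restrict_mem measurableSet_Ioi] with t ht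
    rw [Real.norm_of_nonneg (by
      have ht0 : (0:ℝ) < t := lt_trans one_pos ht
      positivity)]
    exact K2_upper_pt n hn r t hr hr1 (le_of_lt ht)

/-- Small-`r` asymptotics of the long-time logarithmic kernel `K₂(r) = ∫₁^∞ P_n(r,t)/t dt`
built from the Davies–Mandouvalos comparison function: there is `C > 0` with
`C⁻¹ ≤ K₂(r) ≤ C` for all `0 < r ≤ 1`. -/
theorem log_kernel_K2_asymp_small (n : ℕ) (hn : 2 ≤ n) :
    ∃ C : ℝ, 0 < C ∧ ∀ r : ℝ, 0 < r → r ≤ 1 →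
      (C⁻¹ ≤
        ∫ t in Set.Ioi (1 : ℝ),
          (t ^ (-(n : ℝ)/2) *
            Real.exp (-(((n : ℝ) - 1)^2 * t / 4) - r^2 / (4 * t) - ((n : ℝ) - 1) * r / 2) *
            (1 + r + t) ^ (((n : ℝ) - 3)/2) * (1 + r)) / t) ∧
      ((∫ t in Set.Ioi (1 : ℝ),
          (t ^ (-(n : ℝ)/2) *
            Real.exp (-(((n : ℝ) - 1)^2 * t / 4) - r^2 / (4 * t) - ((n : ℝ) - 1) * r / 2) *
            (1 + r + t) ^ (((n : ℝ) - 3)/2) * (1 + r)) / t) ≤ C) := by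
  set M : ℝ := ∫ t in Set.Ioi (1:ℝ), 2 * 3 ^ max (((n : ℝ) - 3)/2) 0 * Real.exp (-(1/4) * t)
    with hM
  refine ⟨max M (K2c0 n)⁻¹, lt_of_lt_of_le (inv_pos.mpr (K2c0_pos n)) (le_max_right _ _),
    fun r hr hr1 => ⟨?_, ?_⟩⟩
  · -- lower bound
    have hCinv : (max M (K2c0 n)⁻¹)⁻¹ ≤ K2c0 n := by
      have h := inv_anti₀ (inv_pos.mpr (K2c0_pos n)) (le_max_right M (K2c0 n)⁻¹)
      rwa [inv_inv] at h
    refine le_trans hCinv ?_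
    have hint := K2_integrable n hn r hr hr1
    have step1 : K2c0 n ≤ ∫ t in Set.Ioc (1:ℝ) 2,
        (t ^ (-(n : ℝ)/2) *
          Real.exp (-(((n : ℝ) - 1)^2 * t / 4) - r^2 / (4 * t) - ((n : ℝ) - 1) * r / 2) *
          (1 + r + t) ^ (((n : ℝ) - 3)/2) * (1 + r)) / t := by
      have hconst : ∫ _ in Set.Ioc (1:ℝ) 2, K2c0 n = K2c0 n := by
        rw [setIntegral_const]
        simp [Real.volume_Ioc]
        norm_num
      rw [← hconst]
      apply setIntegral_mono_on
      · exact (integrableOn_const_iff).mpr (Or.inr measure_Ioc_lt_top)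
      · exact hint.mono_set Set.Ioc_subset_Ioi_self
      · exact measurableSet_Ioc
      · exact fun t ht => K2_lower_pt n hn r t hr hr1 ht
    refine le_trans step1 ?_
    apply setIntegral_mono_set hint
    · filter_upwards [ae_restrict_mem measurableSet_Ioi] with t ht
      have ht0 : (0:ℝ) < t := lt_trans one_pos ht
      positivity
    · exact HasSubset.Subset.eventuallyLE Set.Ioc_subset_Ioi_self
  · -- upper bound
    refine le_trans ?_ (le_max_left _ _)
    rw [hM]
    apply setIntegral_mono_on (K2_integrable n hn r hr hr1)
      ((exp_neg_integrableOn_Ioi 1 (by norm_num : (0:ℝ) < 1/4)).const_mul _)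
      measurableSet_Ioi
    exact fun t ht => K2_upper_pt n hn r t hr hr1 (le_of_lt ht)
end

section
/- Let n ≥ 2 be an integer, let P_n(r,t) = t^{−n/2} exp(−(n−1)² t/4 − r²/(4t) − (n−1)r/2) · (1+r+t)^{(n−3)/2} · (1+r) for r, t > 0, and set K₂(r) = ∫₁^∞ P_n(r,t)/t dt. Then for every real p ≥ 1, the radial integral ∫₀^∞ K₂(r)^p · sinh(r)^{n−1} dr is finite if and only if p > 1. -/
open MeasureTheory Real Set

namespace K2Aux

/-- The integrand `P_n(r,t)/t`. -/
noncomputable def f (n : ℕ) (r t : ℝ) : ℝ :=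
  (t ^ (-(n : ℝ)/2) *
    Real.exp (-(((n : ℝ) - 1)^2 * t / 4) - r^2 / (4 * t) - ((n : ℝ) - 1) * r / 2) *
    (1 + r + t) ^ (((n : ℝ) - 3)/2) * (1 + r)) / t

noncomputable def q (n : ℕ) : ℝ := ((n : ℝ) - 3)/2

/-- The kernel `K₂`. -/
noncomputable def K2 (n : ℕ) (r : ℝ) : ℝ := ∫ t in Set.Ioi (1 : ℝ), f n r t

lemma f_nonneg (n : ℕ) {r t : ℝ} (hr : 0 ≤ r) (ht : 0 ≤ t) : 0 ≤ f n r t := by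
  unfold f; positivity

lemma f_meas (n : ℕ) : Measurable (Function.uncurry (f n)) := by
  unfold f Function.uncurry; fun_prop

lemma K2_meas (n : ℕ) : StronglyMeasurable (K2 n) :=
  (f_meas n).stronglyMeasurable.integral_prod_right'

/-- AM–GM style bound on the exponential factor. -/
lemma exp_le (n : ℕ) {r t : ℝ} (hr : 0 ≤ r) (ht : 0 < t) :
    Real.exp (-(((n : ℝ) - 1)^2 * t / 4) - r^2 / (4 * t) - ((n : ℝ) - 1) * r / 2)
      ≤ Real.exp (-(((n : ℝ) - 1) * r)) := by
  set a : ℝ := (n : ℝ) - 1 with ha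
  apply Real.exp_le_exp.2
  have key : 0 ≤ (a * t - r)^2 / (4 * t) := by positivity
  have heq : -(a^2 * t / 4) - r^2 / (4 * t) - a * r / 2
      = -(a * r) - (a * t - r)^2 / (4 * t) := by
    field_simp; ring
  rw [heq]; linarith

/-- The pointwise upper bound for `f`. -/
lemma f_le (n : ℕ) (hn : 2 ≤ n) {r t : ℝ} (hr : 0 ≤ r) (ht : 1 ≤ t) :
    f n r t ≤ 2 ^ |q n| * (1 + r) ^ (|q n| + 1) *
      Real.exp (-(((n : ℝ) - 1) * r)) * t ^ (-3/2 : ℝ) := by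
  have ht0 : (0:ℝ) < t := lt_of_lt_of_le one_pos ht
  have hr1 : (0:ℝ) < 1 + r := by linarith
  have hB : (1 + r + t) ^ (q n) ≤ (1 + r) ^ |q n| * 2 ^ |q n| * t ^ |q n| := by
    rcases le_or_gt 0 (q n) with hq | hq
    · rw [abs_of_nonneg hq]
      calc (1 + r + t) ^ (q n) ≤ ((1 + r) * (2 * t)) ^ (q n) :=
            Real.rpow_le_rpow (by positivity) (by nlinarith) hq
        _ = (1 + r) ^ (q n) * 2 ^ (q n) * t ^ (q n) := by
            rw [Real.mul_rpow (by positivity) (by positivity),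
              Real.mul_rpow (by norm_num) ht0.le, mul_assoc]
    · have h1 : (1:ℝ) ≤ (1 + r) ^ |q n| := Real.one_le_rpow (by linarith) (abs_nonneg _)
      have h2 : (1:ℝ) ≤ (2:ℝ) ^ |q n| := Real.one_le_rpow (by norm_num) (abs_nonneg _)
      have h3 : (1:ℝ) ≤ t ^ |q n| := Real.one_le_rpow ht (abs_nonneg _)
      have h12 : (1:ℝ) * 1 ≤ (1 + r) ^ |q n| * 2 ^ |q n| :=
        mul_le_mul h1 h2 zero_le_one (by linarith)
      have h123 : ((1:ℝ) * 1) * 1 ≤ ((1 + r) ^ |q n| * 2 ^ |q n|) * t ^ |q n| :=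
        mul_le_mul h12 h3 zero_le_one (by nlinarith)
      calc (1 + r + t) ^ (q n) ≤ 1 :=
            Real.rpow_le_one_of_one_le_of_nonpos (by linarith) hq.le
        _ ≤ (1 + r) ^ |q n| * 2 ^ |q n| * t ^ |q n| := by linarith
  have hE := exp_le n hr ht0
  have step1 : f n r t ≤ (t ^ (-(n : ℝ)/2) * Real.exp (-(((n : ℝ) - 1) * r)) *
      ((1 + r) ^ |q n| * 2 ^ |q n| * t ^ |q n|) * (1 + r)) / t := by
    unfold f
    have hA : (0:ℝ) ≤ t ^ (-(n : ℝ)/2) := Real.rpow_nonneg ht0.le _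
    have hB0 : (0:ℝ) ≤ (1 + r + t) ^ (q n) := Real.rpow_nonneg (by linarith) _
    have h_ae : t ^ (-(n : ℝ)/2) *
        Real.exp (-(((n : ℝ) - 1)^2 * t / 4) - r^2 / (4 * t) - ((n : ℝ) - 1) * r / 2)
        ≤ t ^ (-(n : ℝ)/2) * Real.exp (-(((n : ℝ) - 1) * r)) :=
      mul_le_mul_of_nonneg_left hE hA
    have hnum : t ^ (-(n : ℝ)/2) *
        Real.exp (-(((n : ℝ) - 1)^2 * t / 4) - r^2 / (4 * t) - ((n : ℝ) - 1) * r / 2) *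
        (1 + r + t) ^ (q n) * (1 + r)
        ≤ t ^ (-(n : ℝ)/2) * Real.exp (-(((n : ℝ) - 1) * r)) *
          ((1 + r) ^ |q n| * 2 ^ |q n| * t ^ |q n|) * (1 + r) := by
      refine mul_le_mul_of_nonneg_right ?_ hr1.le
      exact mul_le_mul h_ae hB hB0 (by positivity)
    show (t ^ (-(n : ℝ)/2) *
        Real.exp (-(((n : ℝ) - 1)^2 * t / 4) - r^2 / (4 * t) - ((n : ℝ) - 1) * r / 2) *
        (1 + r + t) ^ (q n) * (1 + r)) / t ≤ _
    exact (div_le_div_iff_of_pos_right ht0).2 hnum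
  refine step1.trans ?_
  have hts : t ^ (-(n : ℝ)/2) * t ^ |q n| / t = t ^ (-(n : ℝ)/2 + |q n| - 1) := by
    rw [show (-(n : ℝ)/2 + |q n| - 1) = (-(n : ℝ)/2 + |q n|) + (-1) by ring,
      Real.rpow_add ht0, Real.rpow_add ht0, Real.rpow_neg_one]
    field_simp
  have hexp : -(n : ℝ)/2 + |q n| - 1 ≤ (-3/2 : ℝ) := by
    have hn2 : (2:ℝ) ≤ (n:ℝ) := by exact_mod_cast hn
    rcases abs_cases (q n) with ⟨he, _⟩ | ⟨he, _⟩ <;> rw [he] <;> unfold q <;> linarith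
  have hts' : t ^ (-(n : ℝ)/2) * t ^ |q n| / t ≤ t ^ (-3/2 : ℝ) := by
    rw [hts]; exact Real.rpow_le_rpow_of_exponent_le ht hexp
  have hrpow : (1 + r) ^ |q n| * (1 + r) = (1 + r) ^ (|q n| + 1) := by
    rw [Real.rpow_add_one hr1.ne']
  have hCn : (0:ℝ) ≤ 2 ^ |q n| * ((1 + r) ^ |q n| * (1 + r)) *
      Real.exp (-(((n : ℝ) - 1) * r)) := by
    have : (0:ℝ) ≤ (1 + r) ^ |q n| := Real.rpow_nonneg hr1.le _
    positivity
  calc (t ^ (-(n : ℝ)/2) * Real.exp (-(((n : ℝ) - 1) * r)) *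
      ((1 + r) ^ |q n| * 2 ^ |q n| * t ^ |q n|) * (1 + r)) / t
      = 2 ^ |q n| * ((1 + r) ^ |q n| * (1 + r)) * Real.exp (-(((n : ℝ) - 1) * r)) *
        (t ^ (-(n : ℝ)/2) * t ^ |q n| / t) := by ring
    _ ≤ 2 ^ |q n| * ((1 + r) ^ |q n| * (1 + r)) * Real.exp (-(((n : ℝ) - 1) * r)) *
        t ^ (-3/2 : ℝ) := mul_le_mul_of_nonneg_left hts' hCn
    _ = 2 ^ |q n| * (1 + r) ^ (|q n| + 1) * Real.exp (-(((n : ℝ) - 1) * r)) *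
        t ^ (-3/2 : ℝ) := by rw [hrpow]

lemma f_meas_right (n : ℕ) (r : ℝ) : Measurable (f n r) :=
  (f_meas n).comp measurable_prodMk_left

lemma f_int (n : ℕ) (hn : 2 ≤ n) {r : ℝ} (hr : 0 ≤ r) :
    IntegrableOn (f n r) (Set.Ioi 1) := by
  apply Integrable.mono'
    (g := fun t => (2 ^ |q n| * (1 + r) ^ (|q n| + 1) *
      Real.exp (-(((n : ℝ) - 1) * r))) * t ^ (-3/2 : ℝ))
  · exact (integrableOn_Ioi_rpow_of_lt (by norm_num) one_pos).const_mul _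
  · exact (f_meas_right n r).aestronglyMeasurable
  · filter_upwards [ae_restrict_mem measurableSet_Ioi] with t ht
    rw [Real.norm_eq_abs, abs_of_nonneg (f_nonneg n hr (le_of_lt (lt_trans zero_lt_one ht)))]
    simpa [mul_assoc] using f_le n hn hr (le_of_lt ht)

noncomputable def c32 : ℝ := ∫ t in Set.Ioi (1:ℝ), t ^ (-3/2 : ℝ)

lemma c32_nonneg : 0 ≤ c32 :=
  setIntegral_nonneg measurableSet_Ioi fun t ht =>
    Real.rpow_nonneg (le_of_lt (lt_trans zero_lt_one ht)) _

lemma K2_nonneg (n : ℕ) {r : ℝ} (hr : 0 ≤ r) : 0 ≤ K2 n r :=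
  setIntegral_nonneg measurableSet_Ioi fun t ht => f_nonneg n hr (le_of_lt (lt_trans zero_lt_one ht))

lemma K2_le (n : ℕ) (hn : 2 ≤ n) {r : ℝ} (hr : 0 ≤ r) :
    K2 n r ≤ (2 ^ |q n| * c32) * (1 + r) ^ (|q n| + 1) *
      Real.exp (-(((n : ℝ) - 1) * r)) := by
  have h1 : K2 n r ≤ ∫ t in Set.Ioi (1:ℝ),
      (2 ^ |q n| * (1 + r) ^ (|q n| + 1) * Real.exp (-(((n : ℝ) - 1) * r))) *
        t ^ (-3/2 : ℝ) := by
    refine setIntegral_mono_on (f_int n hn hr)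
      ((integrableOn_Ioi_rpow_of_lt (by norm_num) one_pos).const_mul _)
      measurableSet_Ioi fun t ht => ?_
    simpa [mul_assoc] using f_le n hn hr (le_of_lt ht)
  rw [integral_const_mul] at h1
  calc K2 n r ≤ _ := h1
    _ = (2 ^ |q n| * c32) * (1 + r) ^ (|q n| + 1) *
        Real.exp (-(((n : ℝ) - 1) * r)) := by unfold c32; ring

lemma sinh_le_exp {r : ℝ} (hr : 0 < r) : Real.sinh r ≤ Real.exp r := by
  rw [Real.sinh_eq]
  have h1 : 0 < Real.exp r := Real.exp_pos r
  have h2 : 0 < Real.exp (-r) := Real.exp_pos (-r)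
  linarith

lemma cast_sub_one (n : ℕ) (hn : 2 ≤ n) : ((n - 1 : ℕ) : ℝ) = (n : ℝ) - 1 := by
  have h1 : 1 ≤ n := by omega
  push_cast [Nat.cast_sub h1]
  ring

lemma integrable_of_lt (n : ℕ) (hn : 2 ≤ n) {p : ℝ} (hp : 1 < p) :
    IntegrableOn (fun r => K2 n r ^ p * Real.sinh r ^ (n - 1)) (Set.Ioi 0) := by
  have ha : (1:ℝ) ≤ (n:ℝ) - 1 := by
    have : (2:ℝ) ≤ (n:ℝ) := by exact_mod_cast hn
    linarith
  set a : ℝ := (n:ℝ) - 1 with ha_def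
  have ha0 : 0 < a := by linarith
  set ε : ℝ := a * (p - 1) with hε_def
  have hε0 : 0 < ε := by
    have : 0 < p - 1 := by linarith
    positivity
  have hM1 : (1:ℝ) ≤ |q n| + 1 := by
    have := abs_nonneg (q n); linarith
  set Mp : ℝ := (|q n| + 1) * p with hMp_def
  have hMp1 : (1:ℝ) ≤ Mp := by
    calc (1:ℝ) = 1 * 1 := by ring
      _ ≤ (|q n| + 1) * p := mul_le_mul hM1 (by linarith) zero_le_one (by linarith)
  have hMp0 : 0 < Mp := by linarith
  set δ : ℝ := ε / (2 * Mp) with hδ_def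
  have hδ0 : 0 < δ := by positivity
  set C₁ : ℝ := 2 ^ |q n| * c32 with hC₁_def
  have hC₁0 : 0 ≤ C₁ := mul_nonneg (Real.rpow_nonneg (by norm_num) _) c32_nonneg
  have hK2meas : Measurable (K2 n) := (K2_meas n).measurable
  apply Integrable.mono'
    (g := fun r => (C₁ ^ p * (1 + 1/δ) ^ Mp) * Real.exp (-(ε/2) * r))
  · exact (exp_neg_integrableOn_Ioi 0 (by positivity)).const_mul _
  · exact ((hK2meas.pow_const p).mul
      (Real.measurable_sinh.pow_const (n - 1))).aestronglyMeasurable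
  · filter_upwards [ae_restrict_mem measurableSet_Ioi] with r hr
    have hr0 : (0:ℝ) < r := hr
    have hK0 : 0 ≤ K2 n r := K2_nonneg n hr0.le
    have hsinh0 : 0 ≤ Real.sinh r := (Real.sinh_pos_iff.2 hr0).le
    rw [Real.norm_eq_abs, abs_of_nonneg
      (mul_nonneg (Real.rpow_nonneg hK0 _) (pow_nonneg hsinh0 _))]
    have hr1 : (0:ℝ) < 1 + r := by linarith
    -- step 1 : kernel bound raised to the power p
    have h1 : K2 n r ^ p ≤ (C₁ * (1 + r) ^ (|q n| + 1) * Real.exp (-(a * r))) ^ p :=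
      Real.rpow_le_rpow hK0 (K2_le n hn hr0.le) (by linarith)
    have hb0 : (0:ℝ) ≤ (1 + r) ^ (|q n| + 1) := Real.rpow_nonneg hr1.le _
    have h2 : (C₁ * (1 + r) ^ (|q n| + 1) * Real.exp (-(a * r))) ^ p
        = C₁ ^ p * (1 + r) ^ Mp * Real.exp (-(a * r) * p) := by
      rw [Real.mul_rpow (mul_nonneg hC₁0 hb0) (Real.exp_pos _).le,
        Real.mul_rpow hC₁0 hb0, ← Real.rpow_mul hr1.le, ← Real.exp_mul]
    -- step 2 : sinh bound
    have h3 : Real.sinh r ^ (n - 1) ≤ Real.exp (a * r) := by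
      calc Real.sinh r ^ (n - 1) ≤ Real.exp r ^ (n - 1) :=
            pow_le_pow_left₀ hsinh0 (sinh_le_exp hr0) _
        _ = Real.exp (((n - 1 : ℕ) : ℝ) * r) := (Real.exp_nat_mul r (n - 1)).symm
        _ = Real.exp (a * r) := by rw [cast_sub_one n hn]
    -- step 3 : polynomial absorbed into exponential
    have h4 : (1 + r) ^ Mp ≤ (1 + 1/δ) ^ Mp * Real.exp ((ε/2) * r) := by
      have hbase : 1 + r ≤ (1 + 1/δ) * Real.exp (δ * r) := by
        have hexp := Real.add_one_le_exp (δ * r)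
        have hδr : 0 ≤ δ * r := by positivity
        have hpos : (0:ℝ) < 1 + 1/δ := by positivity
        have h5 := mul_le_mul_of_nonneg_left hexp hpos.le
        have hδδ : δ * (1/δ) = 1 := by field_simp
        nlinarith [h5, hδδ, hδr]
      calc (1 + r) ^ Mp ≤ ((1 + 1/δ) * Real.exp (δ * r)) ^ Mp :=
            Real.rpow_le_rpow hr1.le hbase (by linarith)
        _ = (1 + 1/δ) ^ Mp * Real.exp (δ * r * Mp) := by
            rw [Real.mul_rpow (by positivity) (Real.exp_pos _).le, ← Real.exp_mul]
        _ = (1 + 1/δ) ^ Mp * Real.exp ((ε/2) * r) := by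
            congr 1
            have : δ * r * Mp = (δ * Mp) * r := by ring
            rw [this]
            congr 1
            rw [hδ_def]
            field_simp
    -- combine
    have hsum : Real.exp ((ε/2) * r) * Real.exp (-(a * r) * p) * Real.exp (a * r)
        = Real.exp (-(ε/2) * r) := by
      rw [← Real.exp_add, ← Real.exp_add]
      congr 1
      rw [hε_def]
      ring
    calc K2 n r ^ p * Real.sinh r ^ (n - 1)
        ≤ (C₁ ^ p * (1 + r) ^ Mp * Real.exp (-(a * r) * p)) * Real.exp (a * r) := by
          refine mul_le_mul (h2 ▸ h1) h3 (pow_nonneg hsinh0 _) ?_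
          have : (0:ℝ) ≤ (1 + r) ^ Mp := Real.rpow_nonneg hr1.le _
          positivity
      _ ≤ (C₁ ^ p * ((1 + 1/δ) ^ Mp * Real.exp ((ε/2) * r)) * Real.exp (-(a * r) * p)) *
            Real.exp (a * r) := by
          have hc : (0:ℝ) ≤ C₁ ^ p := Real.rpow_nonneg hC₁0 _
          have hcc := mul_le_mul_of_nonneg_left h4 hc
          exact mul_le_mul_of_nonneg_right
            (mul_le_mul_of_nonneg_right hcc (Real.exp_pos _).le) (Real.exp_pos _).le
      _ = (C₁ ^ p * (1 + 1/δ) ^ Mp) *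
            (Real.exp ((ε/2) * r) * Real.exp (-(a * r) * p) * Real.exp (a * r)) := by ring
      _ = (C₁ ^ p * (1 + 1/δ) ^ Mp) * Real.exp (-(ε/2) * r) := by rw [hsum]

/-- Lower bound for the kernel: saddle-point interval `[r/(n-1), r/(n-1) + √r/(n-1)]`. -/
lemma K2_ge (n : ℕ) (hn : 2 ≤ n) {r : ℝ} (hr : (n:ℝ) < r) :
    ((2*r) ^ (-(n:ℝ)/2) * (Real.exp (-(((n:ℝ)-1)/4)) * Real.exp (-(((n:ℝ)-1)*r))) *
      (4 ^ (-|q n|) * r ^ (q n)) * r) / (2*r) * (Real.sqrt r / ((n:ℝ)-1)) ≤ K2 n r := by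
  have hn2 : (2:ℝ) ≤ (n:ℝ) := by exact_mod_cast hn
  have ha1 : (1:ℝ) ≤ (n:ℝ)-1 := by linarith
  have ha0 : (0:ℝ) < (n:ℝ)-1 := by linarith
  have hr0 : (0:ℝ) < r := by linarith
  have hr1 : (1:ℝ) ≤ r := by linarith
  have hsq0 : 0 ≤ Real.sqrt r := Real.sqrt_nonneg r
  have hsqr : Real.sqrt r ^ 2 = r := Real.sq_sqrt hr0.le
  have hsqle : Real.sqrt r ≤ r := by nlinarith [hsqr, hsq0]
  set t₀ : ℝ := r / ((n:ℝ)-1) with ht₀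
  set δ : ℝ := Real.sqrt r / ((n:ℝ)-1) with hδ
  have hδ0 : 0 ≤ δ := by positivity
  have ht₀1 : (1:ℝ) ≤ t₀ := by rw [ht₀, le_div_iff₀ ha0]; linarith
  have hsub : Set.Ioc t₀ (t₀ + δ) ⊆ Set.Ioi 1 := fun t htm => lt_of_le_of_lt ht₀1 htm.1
  set cmin : ℝ := ((2*r) ^ (-(n:ℝ)/2) *
      (Real.exp (-(((n:ℝ)-1)/4)) * Real.exp (-(((n:ℝ)-1)*r))) *
      (4 ^ (-|q n|) * r ^ (q n)) * r) / (2*r) with hcmin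
  have hpt : ∀ t ∈ Set.Ioc t₀ (t₀ + δ), cmin ≤ f n r t := by
    intro t htm
    obtain ⟨ht1, ht2⟩ := htm
    have ht0 : (0:ℝ) < t := lt_of_lt_of_le (by linarith) ht1.le
    have htle2r : t ≤ 2*r := by
      have h1 : t₀ ≤ r := by rw [ht₀]; exact div_le_self hr0.le ha1
      have h2 : δ ≤ Real.sqrt r := by rw [hδ]; exact div_le_self hsq0 ha1
      linarith
    have hat : r ≤ ((n:ℝ)-1) * t := by
      have : ((n:ℝ)-1) * t₀ = r := by rw [ht₀]; field_simp
      nlinarith [ht1.le, ha0]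
    have hat2 : ((n:ℝ)-1) * t - r ≤ Real.sqrt r := by
      have : ((n:ℝ)-1) * (t₀ + δ) = r + Real.sqrt r := by rw [ht₀, hδ]; field_simp
      nlinarith [ht2, ha0]
    have hEexp : Real.exp (-(((n:ℝ)-1)/4)) * Real.exp (-(((n:ℝ)-1)*r))
        ≤ Real.exp (-(((n : ℝ) - 1)^2 * t / 4) - r^2 / (4 * t) - ((n : ℝ) - 1) * r / 2) := by
      rw [← Real.exp_add]
      apply Real.exp_le_exp.2
      have heq : -(((n:ℝ)-1)^2 * t / 4) - r^2 / (4 * t) - ((n:ℝ)-1) * r / 2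
          = -(((n:ℝ)-1) * r) - (((n:ℝ)-1) * t - r)^2 / (4 * t) := by
        field_simp; ring
      rw [heq]
      have h3 : (((n:ℝ)-1)*t - r)^2 ≤ r := by nlinarith [hsqr, hat, hat2]
      have h4 : (((n:ℝ)-1)*t - r)^2 / (4*t) ≤ ((n:ℝ)-1)/4 := by
        rw [div_le_iff₀ (by positivity)]
        nlinarith [hat, h3]
      linarith
    have hA : (2*r) ^ (-(n:ℝ)/2) ≤ t ^ (-(n:ℝ)/2) :=
      Real.rpow_le_rpow_of_nonpos ht0 htle2r (by linarith)
    have hB : 4 ^ (-|q n|) * r ^ (q n) ≤ (1 + r + t) ^ (q n) := by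
      have hx1 : r ≤ 1 + r + t := by linarith
      have hx2 : 1 + r + t ≤ 4 * r := by linarith
      rcases le_or_gt 0 (q n) with hq | hq
      · have h41 : (4:ℝ) ^ (-|q n|) ≤ 1 :=
          Real.rpow_le_one_of_one_le_of_nonpos (by norm_num) (neg_nonpos.2 (abs_nonneg _))
        have hrq : r ^ (q n) ≤ (1 + r + t) ^ (q n) := Real.rpow_le_rpow hr0.le hx1 hq
        have h0 : (0:ℝ) ≤ r ^ (q n) := Real.rpow_nonneg hr0.le _
        calc (4:ℝ) ^ (-|q n|) * r ^ (q n) ≤ 1 * r ^ (q n) :=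
              mul_le_mul_of_nonneg_right h41 h0
          _ = r ^ (q n) := one_mul _
          _ ≤ (1 + r + t) ^ (q n) := hrq
      · have habs : -|q n| = q n := by rw [abs_of_neg hq]; ring
        rw [habs, ← Real.mul_rpow (by norm_num) hr0.le]
        exact Real.rpow_le_rpow_of_nonpos (by positivity) hx2 hq.le
    have hE0 : (0:ℝ) ≤ Real.exp (-(((n:ℝ)-1)/4)) * Real.exp (-(((n:ℝ)-1)*r)) := by positivity
    have hA0 : (0:ℝ) ≤ t ^ (-(n:ℝ)/2) := Real.rpow_nonneg ht0.le _
    have hB0 : (0:ℝ) ≤ 4 ^ (-|q n|) * r ^ (q n) :=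
      mul_nonneg (Real.rpow_nonneg (by norm_num) _) (Real.rpow_nonneg hr0.le _)
    have step1 : (2*r) ^ (-(n:ℝ)/2) *
        (Real.exp (-(((n:ℝ)-1)/4)) * Real.exp (-(((n:ℝ)-1)*r)))
        ≤ t ^ (-(n:ℝ)/2) *
          Real.exp (-(((n : ℝ) - 1)^2 * t / 4) - r^2 / (4 * t) - ((n : ℝ) - 1) * r / 2) :=
      mul_le_mul hA hEexp hE0 hA0
    have step2 := mul_le_mul step1 hB hB0
      (mul_nonneg hA0 (Real.exp_pos _).le)
    have step3 := mul_le_mul step2 (show r ≤ 1 + r by linarith) hr0.le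
      (mul_nonneg (mul_nonneg hA0 (Real.exp_pos _).le)
        (Real.rpow_nonneg (by linarith) _))
    rw [hcmin]
    unfold f
    exact div_le_div₀ (by positivity) step3 ht0 htle2r
  have hfin : volume (Set.Ioc t₀ (t₀+δ)) ≠ ⊤ := measure_Ioc_lt_top.ne
  have hint : IntegrableOn (f n r) (Set.Ioc t₀ (t₀+δ)) := (f_int n hn hr0.le).mono_set hsub
  have h2 := setIntegral_ge_of_const_le measurableSet_Ioc hfin hpt hint
  have hvol : volume.real (Set.Ioc t₀ (t₀+δ)) = δ := by
    rw [measureReal_def, Real.volume_Ioc, show t₀ + δ - t₀ = δ by ring, ENNReal.toReal_ofReal hδ0]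
  rw [hvol] at h2
  have h1 : ∫ t in Set.Ioc t₀ (t₀+δ), f n r t ≤ K2 n r := by
    refine setIntegral_mono_set (f_int n hn hr0.le) ?_ (HasSubset.Subset.eventuallyLE hsub)
    filter_upwards [ae_restrict_mem measurableSet_Ioi] with t htm
    exact f_nonneg n hr0.le (le_of_lt (lt_trans zero_lt_one htm))
  calc cmin * (Real.sqrt r / ((n:ℝ)-1)) = cmin * δ := by rw [hδ]
    _ ≤ ∫ t in Set.Ioc t₀ (t₀+δ), f n r t := by rw [smul_eq_mul, mul_comm δ cmin] at h2; exact h2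
    _ ≤ K2 n r := h1

lemma not_integrable (n : ℕ) (hn : 2 ≤ n) :
    ¬ IntegrableOn (fun r => K2 n r ^ (1:ℝ) * Real.sinh r ^ (n - 1)) (Set.Ioi 0) := by
  intro h
  have hn2 : (2:ℝ) ≤ (n:ℝ) := by exact_mod_cast hn
  have ha1 : (1:ℝ) ≤ (n:ℝ)-1 := by linarith
  have ha0 : (0:ℝ) < (n:ℝ)-1 := by linarith
  have h3m : (0:ℝ) < 3 ^ (n-1) := by positivity
  set κ : ℝ := 2 ^ (-(n:ℝ)/2) * Real.exp (-(((n:ℝ)-1)/4)) * 4 ^ (-|q n|) /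
      (2*((n:ℝ)-1)) with hκ
  have hκ0 : 0 < κ := by
    apply div_pos ?_ (by linarith)
    have h1 : (0:ℝ) < 2 ^ (-(n:ℝ)/2) := Real.rpow_pos_of_pos (by norm_num) _
    have h2 : (0:ℝ) < 4 ^ (-|q n|) := Real.rpow_pos_of_pos (by norm_num) _
    positivity
  set c₂ : ℝ := κ / 3 ^ (n-1) with hc₂
  have hc₂0 : 0 < c₂ := div_pos hκ0 h3m
  have key : ∀ r ∈ Set.Ioi (n:ℝ), c₂ * r⁻¹ ≤ K2 n r ^ (1:ℝ) * Real.sinh r ^ (n-1) := by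
    intro r hrm
    have hr : (n:ℝ) < r := hrm
    have hr0 : (0:ℝ) < r := by linarith
    have hr1 : (1:ℝ) ≤ r := by linarith
    have hK := K2_ge n hn hr
    rw [Real.rpow_one]
    have hsinh : Real.exp (((n:ℝ)-1)*r) / 3 ^ (n-1) ≤ Real.sinh r ^ (n-1) := by
      have h3 : Real.exp r / 3 ≤ Real.sinh r := by
        have h2r : (3:ℝ) ≤ Real.exp (2*r) := by nlinarith [Real.add_one_le_exp (2*r)]
        have hee : Real.exp (2*r) = Real.exp r * Real.exp r := by
          rw [← Real.exp_add]; ring_nf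
        have hinv : (Real.exp r)⁻¹ * Real.exp r = 1 := inv_mul_cancel₀ (Real.exp_pos r).ne'
        rw [Real.sinh_eq, Real.exp_neg r]
        nlinarith [h2r, hee, hinv, Real.exp_pos r]
      calc Real.exp (((n:ℝ)-1)*r) / 3 ^ (n-1) = (Real.exp r / 3) ^ (n-1) := by
            rw [div_pow, ← Real.exp_nat_mul, cast_sub_one n hn]
        _ ≤ Real.sinh r ^ (n-1) := pow_le_pow_left₀ (by positivity) h3 _
    have hsimp : (((2*r) ^ (-(n:ℝ)/2) *
        (Real.exp (-(((n:ℝ)-1)/4)) * Real.exp (-(((n:ℝ)-1)*r))) *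
        (4 ^ (-|q n|) * r ^ (q n)) * r) / (2*r) * (Real.sqrt r / ((n:ℝ)-1))) *
        (Real.exp (((n:ℝ)-1)*r) / 3 ^ (n-1)) = c₂ * r⁻¹ := by
      have h2rp : (2*r) ^ (-(n:ℝ)/2) = 2 ^ (-(n:ℝ)/2) * r ^ (-(n:ℝ)/2) :=
        Real.mul_rpow (by norm_num) hr0.le
      have hsq : Real.sqrt r = r ^ ((1:ℝ)/2) := Real.sqrt_eq_rpow r
      have hmerge : r ^ ((1:ℝ)/2) * r ^ (-(n:ℝ)/2) * r ^ (q n) * r = 1 := by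
        rw [← Real.rpow_add hr0, ← Real.rpow_add hr0, ← Real.rpow_add_one hr0.ne',
          show (1:ℝ)/2 + -(n:ℝ)/2 + q n + 1 = 0 by unfold q; ring, Real.rpow_zero]
      have hexp1 : Real.exp (-(((n:ℝ)-1)*r)) * Real.exp (((n:ℝ)-1)*r) = 1 := by
        rw [← Real.exp_add]; simp
      have hstep : (((2*r) ^ (-(n:ℝ)/2) *
          (Real.exp (-(((n:ℝ)-1)/4)) * Real.exp (-(((n:ℝ)-1)*r))) *
          (4 ^ (-|q n|) * r ^ (q n)) * r) / (2*r) * (Real.sqrt r / ((n:ℝ)-1))) *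
          (Real.exp (((n:ℝ)-1)*r) / 3 ^ (n-1))
          = (κ / 3 ^ (n-1)) *
            ((r ^ ((1:ℝ)/2) * r ^ (-(n:ℝ)/2) * r ^ (q n) * r) *
              (Real.exp (-(((n:ℝ)-1)*r)) * Real.exp (((n:ℝ)-1)*r))) * r⁻¹ := by
        rw [h2rp, hsq, hκ]
        field_simp
      rw [hstep, hmerge, hexp1, hc₂]
      ring
    calc c₂ * r⁻¹ = _ := hsimp.symm
      _ ≤ K2 n r * Real.sinh r ^ (n-1) := by
          refine mul_le_mul hK hsinh (by positivity) (K2_nonneg n hr0.le)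
  have h' : IntegrableOn (fun r => K2 n r ^ (1:ℝ) * Real.sinh r ^ (n-1)) (Set.Ioi (n:ℝ)) :=
    h.mono_set (Set.Ioi_subset_Ioi (by positivity))
  have hInt : IntegrableOn (fun r : ℝ => c₂ * r⁻¹) (Set.Ioi (n:ℝ)) := by
    refine Integrable.mono' h' ((measurable_inv.const_mul c₂).aestronglyMeasurable) ?_
    filter_upwards [ae_restrict_mem measurableSet_Ioi] with r hrm
    have hr0 : (0:ℝ) < r := lt_of_le_of_lt (by positivity) hrm
    rw [Real.norm_eq_abs, abs_of_nonneg (by positivity)]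
    exact key r hrm
  have hInt2 : IntegrableOn (fun r : ℝ => r ^ (-1:ℝ)) (Set.Ioi (n:ℝ)) := by
    have h5 := hInt.const_mul c₂⁻¹
    unfold IntegrableOn
    simpa [← mul_assoc, inv_mul_cancel₀ hc₂0.ne', Real.rpow_neg_one] using h5
  have hfin := (integrableOn_Ioi_rpow_iff (show (0:ℝ) < (n:ℝ) by linarith)).1 hInt2
  linarith

end K2Aux

open K2Aux

/-- `L^p`-integrability of the long-time logarithmic kernel `K₂` on `ℍⁿ`:
with `K₂(r) = ∫₁^∞ P_n(r,t)/t dt` built from the Davies–Mandouvalos comparison function,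
for every `p ≥ 1` the radial integral `∫₀^∞ K₂(r)^p sinh(r)^{n−1} dr` is finite
if and only if `p > 1`. -/
theorem log_kernel_K2_Lp_iff (n : ℕ) (hn : 2 ≤ n) (p : ℝ) (hp : 1 ≤ p) :
    IntegrableOn (fun r : ℝ =>
        (∫ t in Set.Ioi (1 : ℝ),
          (t ^ (-(n : ℝ)/2) *
            Real.exp (-(((n : ℝ) - 1)^2 * t / 4) - r^2 / (4 * t) - ((n : ℝ) - 1) * r / 2) *
            (1 + r + t) ^ (((n : ℝ) - 3)/2) * (1 + r)) / t) ^ p *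
          Real.sinh r ^ (n - 1))
      (Set.Ioi 0) ↔ 1 < p := by
  have hshow : (fun r : ℝ =>
      (∫ t in Set.Ioi (1 : ℝ),
        (t ^ (-(n : ℝ)/2) *
          Real.exp (-(((n : ℝ) - 1)^2 * t / 4) - r^2 / (4 * t) - ((n : ℝ) - 1) * r / 2) *
          (1 + r + t) ^ (((n : ℝ) - 3)/2) * (1 + r)) / t) ^ p *
        Real.sinh r ^ (n - 1))
      = fun r : ℝ => K2Aux.K2 n r ^ p * Real.sinh r ^ (n - 1) := rfl
  rw [hshow]
  constructor
  · intro h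
    by_contra hle
    push_neg at hle
    have hp1 : p = 1 := le_antisymm hle hp
    subst hp1
    exact K2Aux.not_integrable n hn h
  · intro h1
    exact K2Aux.integrable_of_lt n hn h1
end
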